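/- Let M, D, L be n-by-n real symmetric positive definite matrices. Then for every nonzero real β, the 2n-by-2n real matrix H(β) = [[βD, L - β²M], [L - β²M, -βD]] is nonsingular. -/

import Mathlib

open Matrix

lemma aux_smul_posSemidef {n : ℕ} {A : Matrix (Fin n) (Fin n) ℝ} (hA : A.PosSemidef)
    {c : ℝ} (hc : 0 ≤ c) : (c • A).PosSemidef := by
  refine ⟨?_, fun x => ?_⟩
  · unfold Matrix.IsHermitian
    rw [conjTranspose_smul, hA.isHermitian.eq]
    simp
  · have h := mul_nonneg hc (hA.2 x)
    simp only [Finsupp.mul_sum] at h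
    convert h using 1
    refine Finsupp.sum_congr fun i _ => Finsupp.sum_congr fun j _ => ?_
    simp only [Matrix.smul_apply, smul_eq_mul]
    ring

theorem stmt_5 {n : ℕ} (M D L : Matrix (Fin n) (Fin n) ℝ)
    (hM : M.PosDef) (hD : D.PosDef) (hL : L.PosDef)
    (β : ℝ) (hβ : β ≠ 0) :
    IsUnit (Matrix.fromBlocks (β • D) (L - β ^ 2 • M) (L - β ^ 2 • M) (-(β • D))).det := by
  set A : Matrix (Fin n) (Fin n) ℝ := L - β ^ 2 • M with hAdef
  have hAsym : Aᴴ = A := by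
    rw [hAdef, conjTranspose_sub, conjTranspose_smul, hL.isHermitian.eq, hM.isHermitian.eq]
    simp
  have hDdet : IsUnit D.det := isUnit_iff_ne_zero.mpr hD.det_pos.ne'
  have hβD_det : IsUnit (β • D).det := by
    rw [det_smul]
    exact (isUnit_iff_ne_zero.mpr (pow_ne_zero _ hβ)).mul hDdet
  have : Invertible (β • D) := (β • D).invertibleOfIsUnitDet hβD_det
  rw [det_fromBlocks₁₁]
  -- Schur complement
  have hinvOf : ⅟(β • D) = (β • D)⁻¹ := invOf_eq_nonsing_inv _
  have hsmulinv : (β • D)⁻¹ = β⁻¹ • D⁻¹ := by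
    have : Invertible β := invertibleOfNonzero hβ
    rw [Matrix.inv_smul (A := D) β hDdet, invOf_eq_inv]
  have hP : (D + (β⁻¹ * β⁻¹) • (A * D⁻¹ * A)).PosDef := by
    apply hD.add_posSemidef
    apply aux_smul_posSemidef
    · have := (hD.inv.posSemidef).conjTranspose_mul_mul_same A
      rwa [hAsym] at this
    · exact mul_self_nonneg _
  have key : -(β • D) - A * ⅟(β • D) * A = (-β) • (D + (β⁻¹ * β⁻¹) • (A * D⁻¹ * A)) := by
    rw [hinvOf, hsmulinv]
    rw [smul_add]
    ext i j
    simp [Matrix.mul_smul, Matrix.smul_mul, mul_assoc]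
    field_simp
    ring
  rw [key, det_smul, det_smul]
  exact ((isUnit_iff_ne_zero.mpr (pow_ne_zero _ hβ)).mul hDdet).mul
    ((isUnit_iff_ne_zero.mpr (pow_ne_zero _ (neg_ne_zero.mpr hβ))).mul
      (isUnit_iff_ne_zero.mpr hP.det_pos.ne'))
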